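/- Let Q = ⊕_{σ∈G} Q_σ be a graded algebra of quotients of a graded semiprime G-graded Lie algebra L. Then, given a nonzero homogeneous element p_σ ∈ Q_σ and homogeneous elements q_{τ_1} ∈ Q_{τ_1}, …, q_{τ_n} ∈ Q_{τ_n} (n ∈ ℕ), there exist α ∈ G and x_α ∈ L_α such that [x_α, p_σ] ≠ 0 and [x_α, _L(q_{τ_i})] ⊆ L for every i = 1, …, n. -/

import Mathlib

/-- The set of iterated adjoint actions of elements of the subalgebra `L` on `q`,
i.e. `q` together with all elements `ad x₁ ⋯ ad xₙ (q)` with `x₁, …, xₙ ∈ L`. -/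
inductive AdOrbit {Φ : Type*} [CommRing Φ] {Q : Type*} [LieRing Q] [LieAlgebra Φ Q]
    (L : LieSubalgebra Φ Q) (q : Q) : Q → Prop
  | base : AdOrbit L q q
  | step (x : Q) (hx : x ∈ L) {y : Q} (hy : AdOrbit L q y) : AdOrbit L q ⁅x, y⁆

/-- `_L(q)`: the `Φ`-linear span in `Q` of `q` together with all elements
`ad x₁ ⋯ ad xₙ (q)` with `x₁, …, xₙ ∈ L`. -/
def lSpan (Φ : Type*) [CommRing Φ] {Q : Type*} [LieRing Q] [LieAlgebra Φ Q]
    (L : LieSubalgebra Φ Q) (q : Q) : Submodule Φ Q :=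
  Submodule.span Φ {y | AdOrbit L q y}

section Aux

variable {Φ : Type*} [CommRing Φ] {Q : Type*} [LieRing Q] [LieAlgebra Φ Q]

lemma sum_lie' {ι : Type*} (s : Finset ι) (f : ι → Q) (y : Q) :
    ⁅∑ i ∈ s, f i, y⁆ = ∑ i ∈ s, ⁅f i, y⁆ := by
  classical
  induction s using Finset.induction_on with
  | empty => simp
  | insert _ _ ha ih => rw [Finset.sum_insert ha, Finset.sum_insert ha, add_lie, ih]

lemma lie_sum' {ι : Type*} (s : Finset ι) (y : Q) (f : ι → Q) :
    ⁅y, ∑ i ∈ s, f i⁆ = ∑ i ∈ s, ⁅y, f i⁆ := by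
  classical
  induction s using Finset.induction_on with
  | empty => simp
  | insert _ _ ha ih => rw [Finset.sum_insert ha, Finset.sum_insert ha, lie_add, ih]

/-- `lSpan` is invariant under the adjoint action of `L`. -/
lemma lSpan_lie_mem (L : LieSubalgebra Φ Q) (q : Q) {x : Q} (hx : x ∈ L)
    {y : Q} (hy : y ∈ lSpan Φ L q) : ⁅x, y⁆ ∈ lSpan Φ L q := by
  induction hy using Submodule.span_induction with
  | mem z hz => exact Submodule.subset_span (AdOrbit.step x hx hz)
  | zero => rw [lie_zero]; exact Submodule.zero_mem _
  | add a b _ _ ha hb => rw [lie_add]; exact Submodule.add_mem _ ha hb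
  | smul c a _ ha => rw [lie_smul]; exact Submodule.smul_mem _ _ ha

lemma self_mem_lSpan (L : LieSubalgebra Φ Q) (q : Q) : q ∈ lSpan Φ L q :=
  Submodule.subset_span AdOrbit.base

/-- The "denominator" set of `q`: elements of `L` bracketing `_L(q)` into `L`. -/
def denom (L : LieSubalgebra Φ Q) (q : Q) : Submodule Φ Q where
  carrier := {x | x ∈ L ∧ ∀ y ∈ lSpan Φ L q, ⁅x, y⁆ ∈ L}
  add_mem' := fun ha hb => ⟨L.add_mem ha.1 hb.1, fun y hy => by
    rw [add_lie]; exact L.add_mem (ha.2 y hy) (hb.2 y hy)⟩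
  zero_mem' := ⟨L.zero_mem, fun y _ => by rw [zero_lie]; exact L.zero_mem⟩
  smul_mem' := fun c x hx => ⟨L.smul_mem c hx.1, fun y hy => by
    rw [smul_lie]; exact L.smul_mem c (hx.2 y hy)⟩

lemma denom_le (L : LieSubalgebra Φ Q) (q : Q) : denom L q ≤ L.toSubmodule :=
  fun _ hx => hx.1

/-- `denom L q` is an ideal of `L`. -/
lemma denom_ideal (L : LieSubalgebra Φ Q) (q : Q) {x a : Q} (hx : x ∈ L)
    (ha : a ∈ denom L q) : ⁅x, a⁆ ∈ denom L q := by
  refine ⟨L.lie_mem hx ha.1, fun m hm => ?_⟩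
  rw [lie_lie]
  exact L.sub_mem (L.lie_mem hx (ha.2 m hm)) (ha.2 _ (lSpan_lie_mem L q hx hm))

variable {G : Type*} [CommGroup G] [DecidableEq G]
variable (𝒜 : G → Submodule Φ Q) [DirectSum.Decomposition 𝒜]

/-- Homogeneous component in the first slot of a bracket. -/
lemma decompose_lie_left
    (hbracket : ∀ (σ τ : G) (x y : Q), x ∈ 𝒜 σ → y ∈ 𝒜 τ → ⁅x, y⁆ ∈ 𝒜 (σ * τ))
    {m : Q} {t : G} (hm : m ∈ 𝒜 t) (γ : G) (a : Q) :
    (DirectSum.decompose 𝒜 ⁅a, m⁆ (γ * t) : Q) = ⁅(DirectSum.decompose 𝒜 a γ : Q), m⁆ := by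
  induction a using DirectSum.Decomposition.inductionOn 𝒜 with
  | zero => simp
  | @homogeneous β x =>
    by_cases h : β = γ
    · subst h
      rw [DirectSum.decompose_of_mem_same 𝒜 (hbracket β t x m x.2 hm),
        DirectSum.decompose_of_mem_same 𝒜 x.2]
    · rw [DirectSum.decompose_of_mem_ne 𝒜 (hbracket β t x m x.2 hm)
        (by simpa using h),
        DirectSum.decompose_of_mem_ne 𝒜 x.2 h, zero_lie]
  | add a b ha hb =>
    rw [add_lie, DirectSum.decompose_add, DirectSum.decompose_add, DirectSum.add_apply,
      Submodule.coe_add, DirectSum.add_apply, Submodule.coe_add, ha, hb, add_lie]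

/-- Homogeneous component in the second slot of a bracket. -/
lemma decompose_lie_right
    (hbracket : ∀ (σ τ : G) (x y : Q), x ∈ 𝒜 σ → y ∈ 𝒜 τ → ⁅x, y⁆ ∈ 𝒜 (σ * τ))
    {x : Q} {β : G} (hx : x ∈ 𝒜 β) (g : G) (a : Q) :
    (DirectSum.decompose 𝒜 ⁅x, a⁆ (β * g) : Q) = ⁅x, (DirectSum.decompose 𝒜 a g : Q)⁆ := by
  induction a using DirectSum.Decomposition.inductionOn 𝒜 with
  | zero => simp
  | @homogeneous t m =>
    by_cases h : t = g
    · subst h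
      rw [DirectSum.decompose_of_mem_same 𝒜 (hbracket β t x m hx m.2),
        DirectSum.decompose_of_mem_same 𝒜 m.2]
    · rw [DirectSum.decompose_of_mem_ne 𝒜 (hbracket β t x m hx m.2)
        (by simpa using h),
        DirectSum.decompose_of_mem_ne 𝒜 m.2 h, lie_zero]
  | add a b ha hb =>
    rw [lie_add, DirectSum.decompose_add, DirectSum.decompose_add, DirectSum.add_apply,
      Submodule.coe_add, DirectSum.add_apply, Submodule.coe_add, ha, hb, lie_add]

/-- `lSpan` of a homogeneous element over a graded subalgebra is graded. -/
lemma lSpan_graded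
    (hbracket : ∀ (σ τ : G) (x y : Q), x ∈ 𝒜 σ → y ∈ 𝒜 τ → ⁅x, y⁆ ∈ 𝒜 (σ * τ))
    (L : LieSubalgebra Φ Q) (hLgr : ∀ x ∈ L, ∀ g : G, (DirectSum.decompose 𝒜 x g : Q) ∈ L)
    {q : Q} {τ : G} (hq : q ∈ 𝒜 τ) :
    ∀ y ∈ lSpan Φ L q, ∀ g : G, (DirectSum.decompose 𝒜 y g : Q) ∈ lSpan Φ L q := by
  intro y hy
  induction hy using Submodule.span_induction with
  | zero => intro g; simp
  | add a b _ _ ha hb =>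
    intro g
    rw [DirectSum.decompose_add]
    push_cast
    exact Submodule.add_mem _ (ha g) (hb g)
  | smul c a _ ha =>
    intro g
    rw [DirectSum.decompose_smul]
    push_cast
    exact Submodule.smul_mem _ _ (ha g)
  | mem z hz =>
    induction hz with
    | base =>
      intro g
      by_cases h : g = τ
      · rw [h, DirectSum.decompose_of_mem_same 𝒜 hq]
        exact self_mem_lSpan L q
      · rw [DirectSum.decompose_of_mem_ne 𝒜 hq (Ne.symm h)]
        exact Submodule.zero_mem _
    | @step x hx y hy ih =>
      intro g
      classical
      have hxsum : ⁅x, y⁆ = ∑ β ∈ (DirectSum.decompose 𝒜 x).support,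
          ⁅(DirectSum.decompose 𝒜 x β : Q), y⁆ := by
        rw [← sum_lie', DirectSum.sum_support_decompose]
      rw [hxsum, DirectSum.decompose_sum, DFinsupp.finset_sum_apply]
      rw [AddSubmonoidClass.coe_finset_sum]
      refine Submodule.sum_mem _ fun β _ => ?_
      have hgb : g = β * (β⁻¹ * g) := by group
      rw [hgb, decompose_lie_right 𝒜 hbracket (DirectSum.decompose 𝒜 x β).2 (β⁻¹ * g)]
      exact lSpan_lie_mem L q (hLgr x hx β) (ih (β⁻¹ * g))

/-- Annihilator of a submodule `K` inside `L`. -/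
def annIn (L : LieSubalgebra Φ Q) (K : Submodule Φ Q) : Submodule Φ Q where
  carrier := {x | x ∈ L ∧ ∀ w ∈ K, ⁅x, w⁆ = 0}
  add_mem' := fun ha hb => ⟨L.add_mem ha.1 hb.1, fun w hw => by
    rw [add_lie, ha.2 w hw, hb.2 w hw, add_zero]⟩
  zero_mem' := ⟨L.zero_mem, fun w _ => zero_lie w⟩
  smul_mem' := fun c x hx => ⟨L.smul_mem c hx.1, fun w hw => by
    rw [smul_lie, hx.2 w hw, smul_zero]⟩

end Aux

/-- Let `Q = ⊕_{σ∈G} Q_σ` be a graded algebra of quotients of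
a graded semiprime `G`-graded Lie algebra `L`.  Given a nonzero homogeneous
`p_σ ∈ Q_σ` and homogeneous `q_{τ_1} ∈ Q_{τ_1}, …, q_{τ_n} ∈ Q_{τ_n}`, there
exist `α ∈ G` and `x_α ∈ L_α` with `⁅x_α, p_σ⁆ ≠ 0` and
`⁅x_α, _L(q_{τ_i})⁆ ⊆ L` for every `i`. -/
theorem common_denominator_property
    {Φ : Type*} [CommRing Φ] {G : Type*} [CommGroup G] [DecidableEq G]
    {Q : Type*} [LieRing Q] [LieAlgebra Φ Q]
    (𝒜 : G → Submodule Φ Q) [DirectSum.Decomposition 𝒜]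
    (hbracket : ∀ (σ τ : G) (x y : Q), x ∈ 𝒜 σ → y ∈ 𝒜 τ → ⁅x, y⁆ ∈ 𝒜 (σ * τ))
    (L : LieSubalgebra Φ Q)
    (hLgr : ∀ x ∈ L, ∀ σ : G, (DirectSum.decompose 𝒜 x σ : Q) ∈ L)
    -- `L` is graded semiprime:
    (hsemiprime : ∀ I : Submodule Φ Q, I ≤ L.toSubmodule →
      (∀ x ∈ L, ∀ y ∈ I, ⁅x, y⁆ ∈ I) →
      (∀ y ∈ I, ∀ σ : G, (DirectSum.decompose 𝒜 y σ : Q) ∈ I) →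
      I ≠ ⊥ → ∃ a ∈ I, ∃ b ∈ I, ⁅a, b⁆ ≠ 0)
    -- `Q` is a graded algebra of quotients of `L`:
    (hquot : ∀ (σ τ : G) (p q : Q), p ∈ 𝒜 σ → p ≠ 0 → q ∈ 𝒜 τ →
      ∃ (α : G) (x : Q), x ∈ 𝒜 α ∧ x ∈ L ∧ ⁅x, p⁆ ≠ 0 ∧
        ∀ y ∈ lSpan Φ L q, ⁅x, y⁆ ∈ L)
    (σ : G) (p : Q) (hp : p ∈ 𝒜 σ) (hp0 : p ≠ 0)
    (n : ℕ) (τ : Fin n → G) (q : Fin n → Q) (hq : ∀ i, q i ∈ 𝒜 (τ i)) :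
    ∃ (α : G) (x : Q), x ∈ 𝒜 α ∧ x ∈ L ∧ ⁅x, p⁆ ≠ 0 ∧
      ∀ i : Fin n, ∀ y ∈ lSpan Φ L (q i), ⁅x, y⁆ ∈ L := by
  classical
  -- the partial denominator ideals
  set K : Finset (Fin n) → Submodule Φ Q :=
    fun S => L.toSubmodule ⊓ ⨅ i ∈ S, denom L (q i) with hK
  have hKmem : ∀ (S : Finset (Fin n)) (x : Q),
      x ∈ K S ↔ x ∈ L ∧ ∀ i ∈ S, x ∈ denom L (q i) := by
    intro S x
    simp [hK, Submodule.mem_inf, Submodule.mem_iInf]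
  have hKle : ∀ S, K S ≤ L.toSubmodule := fun S => inf_le_left
  -- each `K S` is an ideal of `L`
  have hKideal : ∀ (S : Finset (Fin n)), ∀ x ∈ L, ∀ y ∈ K S, ⁅x, y⁆ ∈ K S := by
    intro S x hx y hy
    rw [hKmem] at hy ⊢
    exact ⟨L.lie_mem hx hy.1, fun i hi => denom_ideal L (q i) hx (hy.2 i hi)⟩
  -- each `denom L (q i)` is graded
  have hdenomgr : ∀ (i : Fin n), ∀ y ∈ denom L (q i), ∀ g : G,
      (DirectSum.decompose 𝒜 y g : Q) ∈ denom L (q i) := by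
    intro i y hy g
    refine ⟨hLgr y hy.1 g, fun m hm => ?_⟩
    -- decompose `m` into homogeneous pieces in `lSpan`
    have hmsum : m = ∑ t ∈ (DirectSum.decompose 𝒜 m).support,
        (DirectSum.decompose 𝒜 m t : Q) := (DirectSum.sum_support_decompose 𝒜 m).symm
    rw [hmsum, lie_sum']
    refine L.sum_mem fun t _ => ?_
    have hmt : (DirectSum.decompose 𝒜 m t : Q) ∈ lSpan Φ L (q i) :=
      lSpan_graded 𝒜 hbracket L hLgr (hq i) m hm t
    have := decompose_lie_left 𝒜 hbracket (DirectSum.decompose 𝒜 m t).2 g y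
    rw [← this]
    exact hLgr _ (hy.2 _ hmt) _
  -- each `K S` is graded
  have hKgr : ∀ (S : Finset (Fin n)), ∀ y ∈ K S, ∀ g : G,
      (DirectSum.decompose 𝒜 y g : Q) ∈ K S := by
    intro S y hy g
    rw [hKmem] at hy ⊢
    exact ⟨hLgr y hy.1 g, fun i hi => hdenomgr i y (hy.2 i hi) g⟩
  -- the main density claim, by induction on the finite set of indices
  have main : ∀ S : Finset (Fin n), ∀ (γ : G) (u : Q), u ∈ 𝒜 γ → u ≠ 0 →
      ∃ (α : G) (x : Q), x ∈ 𝒜 α ∧ x ∈ K S ∧ ⁅x, u⁆ ≠ 0 := by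
    intro S
    induction S using Finset.induction_on with
    | empty =>
      intro γ u hu hu0
      obtain ⟨α, x, hxA, hxL, hxu, -⟩ := hquot γ γ u u hu hu0 hu
      exact ⟨α, x, hxA, (hKmem ∅ x).2 ⟨hxL, fun i hi => absurd hi (by simp)⟩, hxu⟩
    | @insert i S hiS ih =>
      intro γ u hu hu0
      by_contra hcon
      push_neg at hcon
      set S' : Finset (Fin n) := insert i S with hS'
      -- every element of `K S'` annihilates `u`
      have hall : ∀ x ∈ K S', ⁅x, u⁆ = 0 := by
        intro x hx
        have hxsum : ⁅x, u⁆ = ∑ g ∈ (DirectSum.decompose 𝒜 x).support,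
            ⁅(DirectSum.decompose 𝒜 x g : Q), u⁆ := by
          rw [← sum_lie', DirectSum.sum_support_decompose]
        rw [hxsum]
        refine Finset.sum_eq_zero fun g _ => ?_
        exact hcon g _ (DirectSum.decompose 𝒜 x g).2 (hKgr S' x hx g)
      -- hence `K S'` annihilates all of `lSpan u`
      have hallOrb : ∀ m : Q, AdOrbit L u m → ∀ x ∈ K S', ⁅x, m⁆ = 0 := by
        intro m hm
        induction hm with
        | base => exact hall
        | @step z hz m' _ ih' =>
          intro x hx
          rw [leibniz_lie, ih' x hx, lie_zero, add_zero]
          have hxz : ⁅x, z⁆ ∈ K S' := by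
            have h := Submodule.neg_mem _ (hKideal S' z hz x hx)
            rwa [lie_skew] at h
          exact ih' _ hxz
      have hallSpan : ∀ m ∈ lSpan Φ L u, ∀ x ∈ K S', ⁅x, m⁆ = 0 := by
        intro m hm
        induction hm using Submodule.span_induction with
        | mem z hz => exact hallOrb z hz
        | zero => intro x _; rw [lie_zero]
        | add a b _ _ ha hb => intro x hx; rw [lie_add, ha x hx, hb x hx, add_zero]
        | smul c a _ ha => intro x hx; rw [lie_smul, ha x hx, smul_zero]
      -- a homogeneous `x₀ ∈ L` with `v := ⁅x₀, u⁆ ≠ 0` and `⁅x₀, lSpan u⁆ ⊆ L`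
      obtain ⟨α₀, x₀, hx₀A, hx₀L, hx₀u, hx₀span⟩ := hquot γ γ u u hu hu0 hu
      set v : Q := ⁅x₀, u⁆ with hv
      have hv0 : v ≠ 0 := hx₀u
      have hvA : v ∈ 𝒜 (α₀ * γ) := hbracket _ _ _ _ hx₀A hu
      have hvL : v ∈ L := hx₀span u (self_mem_lSpan L u)
      have hvOrb : AdOrbit L u v := AdOrbit.step x₀ hx₀L AdOrbit.base
      -- the annihilator ideal
      set N : Submodule Φ Q := annIn L (K S') with hN
      have hNmem : ∀ x : Q, x ∈ N ↔ x ∈ L ∧ ∀ w ∈ K S', ⁅x, w⁆ = 0 := fun x => Iff.rfl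
      have hvN : v ∈ N := by
        refine (hNmem v).2 ⟨hvL, fun w hw => ?_⟩
        rw [← lie_skew, hallOrb v hvOrb w hw, neg_zero]
      have hNideal : ∀ x ∈ L, ∀ a ∈ N, ⁅x, a⁆ ∈ N := by
        intro x hx a ha
        refine (hNmem _).2 ⟨L.lie_mem hx ((hNmem a).1 ha).1, fun w hw => ?_⟩
        rw [lie_lie, ((hNmem a).1 ha).2 w hw, lie_zero, zero_sub,
          ((hNmem a).1 ha).2 _ (hKideal S' x hx w hw), neg_zero]
      have hNgr : ∀ a ∈ N, ∀ g : G, (DirectSum.decompose 𝒜 a g : Q) ∈ N := by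
        intro a ha g
        refine (hNmem _).2 ⟨hLgr a ((hNmem a).1 ha).1 g, fun w hw => ?_⟩
        have hwsum : w = ∑ t ∈ (DirectSum.decompose 𝒜 w).support,
            (DirectSum.decompose 𝒜 w t : Q) := (DirectSum.sum_support_decompose 𝒜 w).symm
        rw [hwsum, lie_sum']
        refine Finset.sum_eq_zero fun t _ => ?_
        have hwt : (DirectSum.decompose 𝒜 w t : Q) ∈ K S' := hKgr S' w hw t
        have := decompose_lie_left 𝒜 hbracket (DirectSum.decompose 𝒜 w t).2 g a
        rw [← this, ((hNmem a).1 ha).2 _ hwt]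
        simp
      -- the ideal `M = K S' ⊓ N` is nonzero
      set M : Submodule Φ Q := K S' ⊓ N with hM
      -- construct a nonzero element of `M`
      obtain ⟨β, x₁, hx₁A, hx₁K, hx₁v⟩ := ih (α₀ * γ) v hvA hv0
      set v' : Q := ⁅x₁, v⁆ with hv'
      have hx₁L : x₁ ∈ L := (hKle S hx₁K : x₁ ∈ L.toSubmodule)
      have hv'0 : v' ≠ 0 := hx₁v
      have hv'A : v' ∈ 𝒜 (β * (α₀ * γ)) := hbracket _ _ _ _ hx₁A hvA
      have hv'L : v' ∈ L := L.lie_mem hx₁L hvL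
      have hv'N : v' ∈ N := hNideal x₁ hx₁L v hvN
      have hv'KS : v' ∈ K S := by
        have h := Submodule.neg_mem _ (hKideal S v hvL x₁ hx₁K)
        rwa [lie_skew] at h
      obtain ⟨δ, y, hyA, hyL, hyv', hyspan⟩ :=
        hquot (β * (α₀ * γ)) (τ i) v' (q i) hv'A hv'0 (hq i)
      set m : Q := ⁅y, v'⁆ with hm
      have hm0 : m ≠ 0 := hyv'
      have hmN : m ∈ N := hNideal y hyL v' hv'N
      have hmKS : m ∈ K S := hKideal S y hyL v' hv'KS
      have hmdenom : m ∈ denom L (q i) := by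
        have h := Submodule.neg_mem _ (denom_ideal L (q i) hv'L ⟨hyL, hyspan⟩)
        rwa [lie_skew] at h
      have hmKS' : m ∈ K S' := by
        rw [hKmem]
        refine ⟨(hKle S hmKS : m ∈ L.toSubmodule), fun j hj => ?_⟩
        rcases Finset.mem_insert.1 hj with h | h
        · rw [h]; exact hmdenom
        · exact ((hKmem S m).1 hmKS).2 j h
      have hMne : M ≠ ⊥ := by
        rw [Submodule.ne_bot_iff]
        exact ⟨m, Submodule.mem_inf.2 ⟨hmKS', hmN⟩, hm0⟩
      -- contradiction with graded semiprimeness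
      obtain ⟨a, haM, b, hbM, hab⟩ := hsemiprime M
        (le_trans inf_le_left (hKle S'))
        (fun x hx y hy => Submodule.mem_inf.2
          ⟨hKideal S' x hx y (Submodule.mem_inf.1 hy).1,
           hNideal x hx y (Submodule.mem_inf.1 hy).2⟩)
        (fun y hy g => Submodule.mem_inf.2
          ⟨hKgr S' y (Submodule.mem_inf.1 hy).1 g,
           hNgr y (Submodule.mem_inf.1 hy).2 g⟩)
        hMne
      exact hab (((hNmem a).1 (Submodule.mem_inf.1 haM).2).2 b (Submodule.mem_inf.1 hbM).1)
  obtain ⟨α, x, hxA, hxK, hxp⟩ := main Finset.univ σ p hp hp0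
  refine ⟨α, x, hxA, ((hKmem Finset.univ x).1 hxK).1, hxp, fun i y hy => ?_⟩
  exact (((hKmem Finset.univ x).1 hxK).2 i (Finset.mem_univ i)).2 y hy
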